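/- arXiv:1911.01696 — 2 statements merged into one kernel-verified Lean document; each statement's English description precedes it below -/
import Mathlib

section
/- Scale invariance of the Weylian length of a curve: let U ⊆ ℝⁿ be open, g : U → Matrix (Fin n) (Fin n) ℝ continuous, φ a 1-form on U with continuous components, Ω : U → ℝ positive and continuously differentiable, and γ : ℝ → ℝⁿ continuously differentiable on [τ₀, τ₁] with γ([τ₀, τ₁]) ⊆ U. Set g̃ = Ω² g and φ̃_ν = φ_ν − Ω⁻¹ ∂_ν Ω. Then ∫_{τ₀}^{τ₁} exp(2 ∫_{τ₀}^{t} Σ_ν φ̃_ν(γ(s)) γ̇^ν(s) ds) · Σ_{μ,ν} g̃_{μν}(γ(t)) γ̇^μ(t) γ̇^ν(t) dt = Ω(γ(τ₀))² · ∫_{τ₀}^{τ₁} exp(2 ∫_{τ₀}^{t} Σ_ν φ_ν(γ(s)) γ̇^ν(s) ds) · Σ_{μ,ν} g_{μν}(γ(t)) γ̇^μ(t) γ̇^ν(t) dt; i.e. the squared Weylian curve length l_W²(γ) = ∫ e^{2∫φ(γ̇)} g(γ̇, γ̇) dτ is invariant under gauge transformations up to the constant factor Ω(γ(τ₀))² depending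 only on the initial point. -/
open scoped BigOperators
open intervalIntegral

noncomputable section

/-- Euclidean space ℝⁿ. -/
abbrev Euc (n : ℕ) := EuclideanSpace ℝ (Fin n)

/-- Partial derivative of `h` at `x` in the `μ`-th coordinate direction. -/
def pd {n : ℕ} (h : Euc n → ℝ) (μ : Fin n) (x : Euc n) : ℝ :=
  fderiv ℝ h x (EuclideanSpace.single μ 1)

lemma clm_apply_eq_sum {n : ℕ} (L : Euc n →L[ℝ] ℝ) (w : Euc n) :
    L w = ∑ ν, w ν * L (EuclideanSpace.single ν 1) := by
  have hw : w = ∑ ν, w ν • (EuclideanSpace.single ν (1:ℝ) : Euc n) := by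
    ext μ
    rw [WithLp.ofLp_sum, Finset.sum_apply]
    simp [EuclideanSpace.single_apply]
  conv_lhs => rw [hw]
  rw [map_sum]
  simp [smul_eq_mul]

/-- Scale invariance of the (squared) Weylian length of a curve:
l_W²(γ) = ∫ e^{2∫φ(γ̇)} g(γ̇,γ̇) dτ changes under a gauge transformation by
Ω only by the constant factor Ω(γ(τ₀))². -/
theorem weylian_length_scale_invariant (n : ℕ)
    (U : Set (Euc n)) (hU : IsOpen U)
    (g : Euc n → Matrix (Fin n) (Fin n) ℝ)
    (hgcont : ∀ μ ν : Fin n, ContinuousOn (fun y => g y μ ν) U)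
    (φ : Fin n → Euc n → ℝ) (hφcont : ∀ ν : Fin n, ContinuousOn (φ ν) U)
    (Ω : Euc n → ℝ) (hΩpos : ∀ y ∈ U, 0 < Ω y) (hΩ : ContDiffOn ℝ 1 Ω U)
    (τ₀ τ₁ : ℝ) (hτ : τ₀ ≤ τ₁) (γ : ℝ → Euc n)
    (hγ : ContDiffOn ℝ 1 γ (Set.Icc τ₀ τ₁))
    (hγU : ∀ t ∈ Set.Icc τ₀ τ₁, γ t ∈ U) :
    (∫ t in τ₀..τ₁,
        Real.exp (2 * ∫ s in τ₀..t, ∑ ν,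
            (φ ν (γ s) - (Ω (γ s))⁻¹ * pd Ω ν (γ s))
              * deriv (fun r => γ r ν) s) *
          ∑ μ, ∑ ν, (Ω (γ t)) ^ 2 * g (γ t) μ ν
            * deriv (fun r => γ r μ) t * deriv (fun r => γ r ν) t)
      = (Ω (γ τ₀)) ^ 2 *
        ∫ t in τ₀..τ₁,
          Real.exp (2 * ∫ s in τ₀..t, ∑ ν,
              φ ν (γ s) * deriv (fun r => γ r ν) s) *
            ∑ μ, ∑ ν, g (γ t) μ ν
              * deriv (fun r => γ r μ) t * deriv (fun r => γ r ν) t := by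
  rcases eq_or_lt_of_le hτ with heq | hlt
  · subst heq; simp
  set I := Set.Icc τ₀ τ₁ with hI
  have hUD : UniqueDiffOn ℝ I := uniqueDiffOn_Icc hlt
  set v : ℝ → Euc n := fun s => derivWithin γ I s with hv
  have hvcont : ContinuousOn v I := hγ.continuousOn_derivWithin hUD le_rfl
  have hγc : ContinuousOn γ I := hγ.continuousOn
  have hvνc : ∀ ν : Fin n, ContinuousOn (fun s => v s ν) I := by
    intro ν
    have := (EuclideanSpace.proj (𝕜 := ℝ) ν).continuous.comp_continuousOn hvcont
    simpa [Function.comp_def] using this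
  have hd : ∀ s ∈ Set.Ioo τ₀ τ₁, HasDerivAt γ (v s) s := by
    intro s hs
    have hmem : I ∈ nhds s := Icc_mem_nhds hs.1 hs.2
    have hdw : DifferentiableWithinAt ℝ γ I s :=
      (hγ s (Set.Ioo_subset_Icc_self hs)).differentiableWithinAt one_ne_zero
    have hdiff : DifferentiableAt ℝ γ s := hdw.differentiableAt hmem
    have heq : derivWithin γ I s = deriv γ s := derivWithin_of_mem_nhds hmem
    rw [hv]; simpa [heq] using hdiff.hasDerivAt
  have hcomp : ∀ s ∈ Set.Ioo τ₀ τ₁, ∀ ν : Fin n,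
      deriv (fun r => γ r ν) s = v s ν := by
    intro s hs ν
    have h1 : HasDerivAt (fun r => γ r ν) (v s ν) s := by
      have := (EuclideanSpace.proj (𝕜 := ℝ) ν).hasFDerivAt.comp_hasDerivAt s (hd s hs)
      simpa [Function.comp_def] using this
    exact h1.deriv
  have hΩγpos : ∀ t ∈ I, 0 < Ω (γ t) := fun t ht => hΩpos _ (hγU t ht)
  have hΩγc : ContinuousOn (fun t => Ω (γ t)) I := (hΩ.continuousOn).comp hγc hγU
  have hpdc : ∀ ν : Fin n, ContinuousOn (fun t => pd Ω ν (γ t)) I := by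
    intro ν
    have h1 : ContinuousOn (fun x => pd Ω ν x) U := by
      have h2 := hΩ.continuousOn_fderiv_of_isOpen hU le_rfl
      exact h2.clm_apply continuousOn_const
    exact h1.comp hγc hγU
  set A : ℝ → ℝ := fun s => ∑ ν, φ ν (γ s) * v s ν with hA
  set B : ℝ → ℝ := fun s => ∑ ν, (Ω (γ s))⁻¹ * pd Ω ν (γ s) * v s ν with hB
  have hAc : ContinuousOn A I := by
    exact continuousOn_finset_sum _ fun ν _ =>
      ((hφcont ν).comp hγc hγU).mul (hvνc ν)
  have hBc : ContinuousOn B I := by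
    exact continuousOn_finset_sum _ fun ν _ =>
      ((hΩγc.inv₀ fun t ht => (hΩγpos t ht).ne').mul (hpdc ν)).mul (hvνc ν)
  have hAint : ∀ t ∈ I, IntervalIntegrable A MeasureTheory.volume τ₀ t := fun t ht =>
    (hAc.mono (Set.Icc_subset_Icc_right ht.2)).intervalIntegrable_of_Icc ht.1
  have hBint : ∀ t ∈ I, IntervalIntegrable B MeasureTheory.volume τ₀ t := fun t ht =>
    (hBc.mono (Set.Icc_subset_Icc_right ht.2)).intervalIntegrable_of_Icc ht.1
  have hFTC : ∀ t ∈ I, (∫ s in τ₀..t, B s)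
      = Real.log (Ω (γ t)) - Real.log (Ω (γ τ₀)) := by
    intro t ht
    have hsub : Set.Icc τ₀ t ⊆ I := Set.Icc_subset_Icc_right ht.2
    have hcont : ContinuousOn (fun r => Real.log (Ω (γ r))) (Set.Icc τ₀ t) :=
      (hΩγc.mono hsub).log fun x hx => (hΩγpos x (hsub hx)).ne'
    have hderiv : ∀ s ∈ Set.Ioo τ₀ t,
        HasDerivAt (fun r => Real.log (Ω (γ r))) (B s) s := by
      intro s hs
      have hs' : s ∈ Set.Ioo τ₀ τ₁ := ⟨hs.1, lt_of_lt_of_le hs.2 ht.2⟩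
      have hsI : s ∈ I := Set.Ioo_subset_Icc_self hs'
      have hΩd : DifferentiableAt ℝ Ω (γ s) :=
        (hΩ.differentiableOn one_ne_zero _ (hγU s hsI)).differentiableAt
          (hU.mem_nhds (hγU s hsI))
      have h1 : HasDerivAt (fun r => Ω (γ r)) (fderiv ℝ Ω (γ s) (v s)) s :=
        hΩd.hasFDerivAt.comp_hasDerivAt s (hd s hs')
      have h2 : HasDerivAt (fun r => Real.log (Ω (γ r)))
          ((Ω (γ s))⁻¹ * fderiv ℝ Ω (γ s) (v s)) s :=
        HasDerivAt.comp (h₂ := Real.log) s (Real.hasDerivAt_log (hΩγpos s hsI).ne') h1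
      have h3 : B s = (Ω (γ s))⁻¹ * fderiv ℝ Ω (γ s) (v s) := by
        rw [hB, clm_apply_eq_sum, Finset.mul_sum]
        refine Finset.sum_congr rfl fun ν _ => ?_
        show (Ω (γ s))⁻¹ * pd Ω ν (γ s) * v s ν
          = (Ω (γ s))⁻¹ * (v s ν * pd Ω ν (γ s))
        ring
      rw [h3]; exact h2
    exact intervalIntegral.integral_eq_sub_of_hasDerivAt_of_le ht.1 hcont hderiv
      (hBint t ht)
  have hnull : ∀ᵐ s : ℝ, s ∉ ({τ₀, τ₁} : Set ℝ) :=
    ((Set.countable_singleton τ₁).insert τ₀).ae_notMem _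
  have hcongr : ∀ t ∈ I, ∀ c : Fin n → ℝ → ℝ,
      (∫ s in τ₀..t, ∑ ν, c ν s * deriv (fun r => γ r ν) s)
        = ∫ s in τ₀..t, ∑ ν, c ν s * v s ν := by
    intro t ht c
    apply intervalIntegral.integral_congr_ae
    filter_upwards [hnull] with s hs hmem
    rw [Set.uIoc_of_le ht.1] at hmem
    have hs' : s ∈ Set.Ioo τ₀ τ₁ := by
      refine ⟨hmem.1, lt_of_le_of_ne (le_trans hmem.2 ht.2) ?_⟩
      intro h; exact hs (by simp [h])
    exact Finset.sum_congr rfl fun ν _ => by rw [hcomp s hs' ν]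
  have key : ∀ t ∈ I,
      Real.exp (2 * ∫ s in τ₀..t, ∑ ν,
          (φ ν (γ s) - (Ω (γ s))⁻¹ * pd Ω ν (γ s)) * deriv (fun r => γ r ν) s) *
        (∑ μ, ∑ ν, (Ω (γ t)) ^ 2 * g (γ t) μ ν
          * deriv (fun r => γ r μ) t * deriv (fun r => γ r ν) t)
      = (Ω (γ τ₀)) ^ 2 *
        (Real.exp (2 * ∫ s in τ₀..t, ∑ ν, φ ν (γ s) * deriv (fun r => γ r ν) s) *
          ∑ μ, ∑ ν, g (γ t) μ ν
            * deriv (fun r => γ r μ) t * deriv (fun r => γ r ν) t) := by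
    intro t ht
    have hE : (∫ s in τ₀..t, ∑ ν,
        (φ ν (γ s) - (Ω (γ s))⁻¹ * pd Ω ν (γ s)) * deriv (fun r => γ r ν) s)
        = (∫ s in τ₀..t, A s)
            - (Real.log (Ω (γ t)) - Real.log (Ω (γ τ₀))) := by
      rw [hcongr t ht (fun ν s => φ ν (γ s) - (Ω (γ s))⁻¹ * pd Ω ν (γ s))]
      have hsplit : ∀ s : ℝ,
          (∑ ν, (φ ν (γ s) - (Ω (γ s))⁻¹ * pd Ω ν (γ s)) * v s ν)
            = A s - B s := by
        intro s
        rw [hA, hB, ← Finset.sum_sub_distrib]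
        exact Finset.sum_congr rfl fun ν _ => by ring
      simp_rw [hsplit]
      rw [intervalIntegral.integral_sub (hAint t ht) (hBint t ht), hFTC t ht]
    have hF : (∫ s in τ₀..t, ∑ ν, φ ν (γ s) * deriv (fun r => γ r ν) s)
        = ∫ s in τ₀..t, A s := hcongr t ht (fun ν s => φ ν (γ s))
    rw [hE, hF]
    have hsum : (∑ μ, ∑ ν, (Ω (γ t)) ^ 2 * g (γ t) μ ν
        * deriv (fun r => γ r μ) t * deriv (fun r => γ r ν) t)
        = (Ω (γ t)) ^ 2 * ∑ μ, ∑ ν, g (γ t) μ ν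
            * deriv (fun r => γ r μ) t * deriv (fun r => γ r ν) t := by
      rw [Finset.mul_sum]
      refine Finset.sum_congr rfl fun μ _ => ?_
      rw [Finset.mul_sum]
      exact Finset.sum_congr rfl fun ν _ => by ring
    rw [hsum]
    have h0 := hΩγpos τ₀ (Set.left_mem_Icc.mpr hτ)
    have ht' := hΩγpos t ht
    have hexp : Real.exp (2 * ((∫ s in τ₀..t, A s)
          - (Real.log (Ω (γ t)) - Real.log (Ω (γ τ₀)))))
        = Real.exp (2 * ∫ s in τ₀..t, A s) * (Ω (γ τ₀)) ^ 2
            * ((Ω (γ t)) ^ 2)⁻¹ := by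
      rw [mul_sub, mul_sub, Real.exp_sub, Real.exp_sub]
      rw [two_mul (Real.log (Ω (γ t))), Real.exp_add, Real.exp_log ht']
      rw [two_mul (Real.log (Ω (γ τ₀))), Real.exp_add, Real.exp_log h0]
      rw [sq, sq]
      field_simp
    rw [hexp]
    have hne : (Ω (γ t)) ^ 2 ≠ 0 := by positivity
    field_simp
  rw [← intervalIntegral.integral_const_mul]
  apply intervalIntegral.integral_congr
  rw [Set.uIcc_of_le hτ]
  intro t ht
  exact key t ht
end
end

section
/- Weyl's decomposition of the curvature: the failure of antisymmetry of the Weyl geometric curvature tensor in its first index pair is exactly the scale curvature. Precisely: let U ⊆ ℝⁿ be open, g : U → Matrix (Fin n) (Fin n) ℝ twice continuously differentiable with symmetric invertible values, and φ a 1-form on U with continuously differentiable components. Let Γ = Γ(g,φ) and define the curvature tensor R^μ_{νλκ}(x) = ∂_λ Γ^μ_{νκ}(x) − ∂_κ Γ^μ_{νλ}(x) + Σ_α (Γ^α_{νκ}(x) Γ^μ_{αλ}(x) − Γ^α_{νλ}(x) Γ^μ_{ακ}(x)), its fully covariant version R_{μνλκ} = Σ_α g_{μα} R^α_{νλκ},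 and the scale curvature f_{λκ} = ∂_λ φ_κ − ∂_κ φ_λ. Then for every x ∈ U and all μ, ν, λ, κ: R_{μνλκ}(x) + R_{νμλκ}(x) = 2 f_{λκ}(x) g_{μν}(x). In particular, R_{μνλκ} is antisymmetric in its first two indices (as in Riemannian geometry) exactly where the scale curvature vanishes. -/
open scoped BigOperators
open Matrix

noncomputable section

/-- Kronecker delta. -/
def kron {n : ℕ} (i j : Fin n) : ℝ := if i = j then 1 else 0

/-- Levi-Civita Christoffel symbols Γ(g)^μ_{νλ}
    = ½ Σ_α g^{μα} (∂_ν g_{λα} + ∂_λ g_{αν} − ∂_α g_{νλ}). -/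
def christoffel {n : ℕ} (g : Euc n → Matrix (Fin n) (Fin n) ℝ)
    (μ ν l : Fin n) (x : Euc n) : ℝ :=
  (1 / 2) * ∑ α, (g x)⁻¹ μ α *
    (pd (fun y => g y l α) ν x + pd (fun y => g y α ν) l x - pd (fun y => g y ν l) α x)

/-- The Weylian affine connection Γ(g,φ)^μ_{νλ}
    = Γ(g)^μ_{νλ} + δ^μ_ν φ_λ + δ^μ_λ φ_ν − g_{νλ} φ^μ. -/
def weylConn {n : ℕ} (g : Euc n → Matrix (Fin n) (Fin n) ℝ)
    (φ : Fin n → Euc n → ℝ) (μ ν l : Fin n) (x : Euc n) : ℝ :=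
  christoffel g μ ν l x + kron μ ν * φ l x + kron μ l * φ ν x
    - g x ν l * ∑ α, (g x)⁻¹ μ α * φ α x

/-- The Weyl geometric curvature tensor
R^μ_{νλκ} = ∂_λ Γ^μ_{νκ} − ∂_κ Γ^μ_{νλ} + Σ_α (Γ^α_{νκ} Γ^μ_{αλ} − Γ^α_{νλ} Γ^μ_{ακ})
of the Weylian affine connection Γ = Γ(g,φ). -/
def weylCurv {n : ℕ} (g : Euc n → Matrix (Fin n) (Fin n) ℝ)
    (φ : Fin n → Euc n → ℝ) (μ ν l κ : Fin n) (x : Euc n) : ℝ :=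
  pd (weylConn g φ μ ν κ) l x - pd (weylConn g φ μ ν l) κ x
    + ∑ α, (weylConn g φ α ν κ x * weylConn g φ μ α l x
        - weylConn g φ α ν l x * weylConn g φ μ α κ x)

section helpers
variable {n : ℕ} {f h : Euc n → ℝ} {x : Euc n} {μ : Fin n}

lemma pd_congr {h2 : Euc n → ℝ} (hfh : f =ᶠ[nhds x] h2) : pd f μ x = pd h2 μ x := by
  unfold pd; rw [hfh.fderiv_eq]

lemma pd_add (hf : DifferentiableAt ℝ f x) (hh : DifferentiableAt ℝ h x) :
    pd (fun y => f y + h y) μ x = pd f μ x + pd h μ x := by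
  unfold pd; rw [fderiv_fun_add hf hh]; simp

lemma pd_mul (hf : DifferentiableAt ℝ f x) (hh : DifferentiableAt ℝ h x) :
    pd (fun y => f y * h y) μ x = pd f μ x * h x + f x * pd h μ x := by
  unfold pd; rw [fderiv_fun_mul hf hh]; simp; ring

lemma pd_const_mul (c : ℝ) (hf : DifferentiableAt ℝ f x) :
    pd (fun y => c * f y) μ x = c * pd f μ x := by
  unfold pd; rw [fderiv_const_mul hf]; simp

lemma pd_sum {ι : Type*} (s : Finset ι) (F : ι → Euc n → ℝ)
    (hF : ∀ i ∈ s, DifferentiableAt ℝ (F i) x) :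
    pd (fun y => ∑ i ∈ s, F i y) μ x = ∑ i ∈ s, pd (F i) μ x := by
  unfold pd; rw [fderiv_fun_sum hF]; simp

lemma pd_pd_symm (hf : ContDiffAt ℝ 2 f x) (l κ : Fin n) :
    pd (fun y => pd f κ y) l x = pd (fun y => pd f l y) κ x := by
  have hd : DifferentiableAt ℝ (fderiv ℝ f) x :=
    (hf.fderiv_right (m := 1) (by norm_num)).differentiableAt one_ne_zero
  have hsymm := hf.isSymmSndFDerivAt (by norm_num)
  unfold pd
  rw [fderiv_clm_apply hd (differentiableAt_const _),
      fderiv_clm_apply hd (differentiableAt_const _)]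
  simp [hsymm (EuclideanSpace.single l 1) (EuclideanSpace.single κ 1)]

lemma differentiableAt_det {M : Euc n → Matrix (Fin n) (Fin n) ℝ}
    (hM : ∀ i j, DifferentiableAt ℝ (fun y => M y i j) x) :
    DifferentiableAt ℝ (fun y => (M y).det) x := by
  simp only [Matrix.det_apply']
  apply DifferentiableAt.fun_sum
  intro σ _
  exact (differentiableAt_const _).mul
    (HasFDerivAt.finset_prod (fun i _ => (hM (σ i) i).hasFDerivAt)).differentiableAt

lemma differentiableAt_adjugate {M : Euc n → Matrix (Fin n) (Fin n) ℝ} (i j : Fin n)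
    (hM : ∀ i j, DifferentiableAt ℝ (fun y => M y i j) x) :
    DifferentiableAt ℝ (fun y => (M y).adjugate i j) x := by
  simp only [Matrix.adjugate_apply]
  apply differentiableAt_det
  intro k l
  simp only [Matrix.updateRow_apply]
  by_cases hk : k = j
  · simp [hk]
  · simp [hk, hM k l]

lemma sum_swap_mul (A B : Fin n → ℝ) (C : Fin n → Fin n → ℝ) :
    ∑ α, A α * ∑ β, B β * C α β = ∑ α, (∑ β, A β * C β α) * B α := by
  simp only [Finset.mul_sum, Finset.sum_mul]
  rw [Finset.sum_comm]
  exact Finset.sum_congr rfl fun α _ => Finset.sum_congr rfl fun β _ => by ring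
end helpers

section ctx
variable {n : ℕ} {U : Set (Euc n)} {g : Euc n → Matrix (Fin n) (Fin n) ℝ}
  {φ : Fin n → Euc n → ℝ} {x : Euc n}

lemma diff_g_entry (hU : IsOpen U) (hg : ∀ μ ν : Fin n, ContDiffOn ℝ 2 (fun y => g y μ ν) U)
    (hx : x ∈ U) (i j : Fin n) : DifferentiableAt ℝ (fun y => g y i j) x :=
  ((hg i j).contDiffAt (hU.mem_nhds hx)).differentiableAt (by norm_num)

lemma diff_inv_entry (hU : IsOpen U) (hginv : ∀ y ∈ U, IsUnit (g y))
    (hg : ∀ μ ν : Fin n, ContDiffOn ℝ 2 (fun y => g y μ ν) U) (hx : x ∈ U) (i j : Fin n) :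
    DifferentiableAt ℝ (fun y => (g y)⁻¹ i j) x := by
  have hgd : ∀ i j, DifferentiableAt ℝ (fun y => g y i j) x := diff_g_entry hU hg hx
  have heq : ∀ y : Euc n, (g y)⁻¹ i j = ((g y).det)⁻¹ * (g y).adjugate i j := by
    intro y
    rw [Matrix.inv_def, Matrix.smul_apply, Ring.inverse_eq_inv', smul_eq_mul]
  simp only [heq]
  have hne : (g x).det ≠ 0 := ((Matrix.isUnit_iff_isUnit_det _).1 (hginv x hx)).ne_zero
  exact ((differentiableAt_det hgd).inv hne).mul (differentiableAt_adjugate i j hgd)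

lemma diff_pd_g (hU : IsOpen U) (hg : ∀ μ ν : Fin n, ContDiffOn ℝ 2 (fun y => g y μ ν) U)
    (hx : x ∈ U) (i j l : Fin n) :
    DifferentiableAt ℝ (fun y => pd (fun z => g z i j) l y) x := by
  have h1 : ContDiffOn ℝ 1 (fun y => fderiv ℝ (fun z => g z i j) y) U :=
    (hg i j).fderiv_of_isOpen hU (by norm_num)
  have h2 : ContDiffOn ℝ 1
      (fun y => fderiv ℝ (fun z => g z i j) y (EuclideanSpace.single l 1)) U :=
    h1.clm_apply contDiffOn_const
  exact (h2.contDiffAt (hU.mem_nhds hx)).differentiableAt one_ne_zero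

lemma diff_phi (hU : IsOpen U) (hφ : ∀ ν : Fin n, ContDiffOn ℝ 1 (φ ν) U) (hx : x ∈ U)
    (i : Fin n) : DifferentiableAt ℝ (φ i) x :=
  ((hφ i).contDiffAt (hU.mem_nhds hx)).differentiableAt one_ne_zero

lemma diff_weylConn (hU : IsOpen U) (hginv : ∀ y ∈ U, IsUnit (g y))
    (hg : ∀ μ ν : Fin n, ContDiffOn ℝ 2 (fun y => g y μ ν) U)
    (hφ : ∀ ν : Fin n, ContDiffOn ℝ 1 (φ ν) U) (hx : x ∈ U) (a b c : Fin n) :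
    DifferentiableAt ℝ (weylConn g φ a b c) x := by
  have hgd := diff_g_entry hU hg hx
  have hinv := diff_inv_entry hU hginv hg hx
  have hφd := diff_phi hU hφ hx
  have hpdg := diff_pd_g hU hg hx
  unfold weylConn christoffel
  apply DifferentiableAt.sub
  · apply DifferentiableAt.add
    · apply DifferentiableAt.add
      · apply (differentiableAt_const _).mul
        apply DifferentiableAt.fun_sum
        intro α _
        exact (hinv a α).mul (((hpdg c α b).add (hpdg α b c)).sub (hpdg b c α))
      · exact (hφd c).const_mul _
    · exact (hφd b).const_mul _
  · exact (hgd b c).mul (DifferentiableAt.fun_sum fun α _ => (hinv a α).mul (hφd α))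
end ctx

section ctx2
variable {n : ℕ} {U : Set (Euc n)} {g : Euc n → Matrix (Fin n) (Fin n) ℝ}
  {φ : Fin n → Euc n → ℝ} {y : Euc n}

lemma sum_g_inv (hginv : ∀ y ∈ U, IsUnit (g y)) (hy : y ∈ U) (ν α : Fin n) :
    ∑ μ', g y ν μ' * (g y)⁻¹ μ' α = if ν = α then (1:ℝ) else 0 := by
  have h := Matrix.mul_nonsing_inv (g y) ((Matrix.isUnit_iff_isUnit_det _).1 (hginv y hy))
  have h2 := congrFun (congrFun h ν) α
  simpa [Matrix.mul_apply, Matrix.one_apply] using h2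

lemma lowConn_eq (hginv : ∀ y ∈ U, IsUnit (g y)) (hy : y ∈ U) (μ ν l : Fin n) :
    ∑ α, g y μ α * weylConn g φ α ν l y
      = (1/2) * (pd (fun z => g z l μ) ν y + pd (fun z => g z μ ν) l y
          - pd (fun z => g z ν l) μ y)
        + g y μ ν * φ l y + g y μ l * φ ν y - g y ν l * φ μ y := by
  have key : ∀ T : Fin n → ℝ, ∑ α, g y μ α * ∑ β, (g y)⁻¹ α β * T β = T μ := by
    intro T
    simp only [Finset.mul_sum]
    rw [Finset.sum_comm]
    have : ∀ β, ∑ α, g y μ α * ((g y)⁻¹ α β * T β)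
        = (if μ = β then (1:ℝ) else 0) * T β := by
      intro β
      rw [← sum_g_inv hginv hy μ β, Finset.sum_mul]
      exact Finset.sum_congr rfl fun α _ => by ring
    rw [Finset.sum_congr rfl fun β _ => this β]
    simp
  have expand : ∀ α : Fin n, g y μ α * weylConn g φ α ν l y
      = g y μ α * ∑ β, (g y)⁻¹ α β * ((1/2) * (pd (fun z => g z l β) ν y
            + pd (fun z => g z β ν) l y - pd (fun z => g z ν l) β y))
        + g y μ α * ((if α = ν then (1:ℝ) else 0) * φ l y)
        + g y μ α * ((if α = l then (1:ℝ) else 0) * φ ν y)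
        - g y μ α * (g y ν l * ∑ β, (g y)⁻¹ α β * φ β y) := by
    intro α
    unfold weylConn christoffel kron
    have e1 : (1/2 : ℝ) * ∑ β, (g y)⁻¹ α β * (pd (fun z => g z l β) ν y
          + pd (fun z => g z β ν) l y - pd (fun z => g z ν l) β y)
        = ∑ β, (g y)⁻¹ α β * ((1/2) * (pd (fun z => g z l β) ν y
            + pd (fun z => g z β ν) l y - pd (fun z => g z ν l) β y)) := by
      rw [Finset.mul_sum]
      exact Finset.sum_congr rfl fun β _ => by ring
    rw [e1]
    ring
  have h2 : ∑ α, g y μ α * ((if α = ν then (1:ℝ) else 0) * φ l y) = g y μ ν * φ l y := by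
    simp [mul_ite, ite_mul, Finset.sum_ite_eq]
  have h3 : ∑ α, g y μ α * ((if α = l then (1:ℝ) else 0) * φ ν y) = g y μ l * φ ν y := by
    simp [mul_ite, ite_mul, Finset.sum_ite_eq]
  have h4 : ∑ α, g y μ α * (g y ν l * ∑ β, (g y)⁻¹ α β * φ β y) = g y ν l * φ μ y := by
    have hk := key (fun β => φ β y)
    calc ∑ α, g y μ α * (g y ν l * ∑ β, (g y)⁻¹ α β * φ β y)
        = g y ν l * ∑ α, g y μ α * ∑ β, (g y)⁻¹ α β * φ β y := by
          rw [Finset.mul_sum]; exact Finset.sum_congr rfl fun α _ => by ring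
      _ = g y ν l * φ μ y := by rw [hk]
  have h1 := key (fun β => (1/2) * (pd (fun z => g z l β) ν y
      + pd (fun z => g z β ν) l y - pd (fun z => g z ν l) β y))
  rw [Finset.sum_congr rfl fun α _ => expand α]
  simp only [Finset.sum_add_distrib, Finset.sum_sub_distrib]
  rw [h1, h2, h3, h4]

lemma g_symm_pt (hgsym : ∀ y ∈ U, (g y)ᵀ = g y) (hy : y ∈ U) (a b : Fin n) :
    g y a b = g y b a := by
  conv_rhs => rw [← hgsym y hy]
  rfl

lemma pd_g_symm (hU : IsOpen U) (hgsym : ∀ y ∈ U, (g y)ᵀ = g y) (hy : y ∈ U) (a b c : Fin n) :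
    pd (fun z => g z a b) c y = pd (fun z => g z b a) c y := by
  apply pd_congr
  filter_upwards [hU.mem_nhds hy] with z hz
  exact g_symm_pt hgsym hz a b

lemma lowConn_add (hU : IsOpen U) (hgsym : ∀ y ∈ U, (g y)ᵀ = g y)
    (hginv : ∀ y ∈ U, IsUnit (g y)) (hy : y ∈ U) (μ ν l : Fin n) :
    (∑ α, g y μ α * weylConn g φ α ν l y) + (∑ α, g y ν α * weylConn g φ α μ l y)
      = pd (fun z => g z μ ν) l y + 2 * (φ l y * g y μ ν) := by
  rw [lowConn_eq hginv hy μ ν l, lowConn_eq hginv hy ν μ l]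
  rw [pd_g_symm hU hgsym hy l μ, pd_g_symm hU hgsym hy ν l, pd_g_symm hU hgsym hy l ν,
      pd_g_symm hU hgsym hy ν μ, g_symm_pt hgsym hy ν μ, g_symm_pt hgsym hy ν l]
  ring
end ctx2


/-- Weyl's decomposition of the curvature: the failure of antisymmetry of the
fully covariant curvature tensor R_{μνλκ} = Σ_α g_{μα} R^α_{νλκ} in its first
index pair is exactly (twice) the scale curvature f_{λκ} = ∂_λ φ_κ − ∂_κ φ_λ:
R_{μνλκ} + R_{νμλκ} = 2 f_{λκ} g_{μν}. -/
theorem weylCurv_first_pair_antisymmetry_defect (n : ℕ)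
    (U : Set (Euc n)) (hU : IsOpen U)
    (g : Euc n → Matrix (Fin n) (Fin n) ℝ)
    (hgsym : ∀ y ∈ U, (g y)ᵀ = g y) (hginv : ∀ y ∈ U, IsUnit (g y))
    (hg : ∀ μ ν : Fin n, ContDiffOn ℝ 2 (fun y => g y μ ν) U)
    (φ : Fin n → Euc n → ℝ) (hφ : ∀ ν : Fin n, ContDiffOn ℝ 1 (φ ν) U) :
    ∀ x ∈ U, ∀ μ ν l κ : Fin n,
      (∑ α, g x μ α * weylCurv g φ α ν l κ x)
        + (∑ α, g x ν α * weylCurv g φ α μ l κ x)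
      = 2 * (pd (φ κ) l x - pd (φ l) κ x) * g x μ ν := by
  intro x hx μ ν l κ
  have hgd : ∀ i j, DifferentiableAt ℝ (fun z => g z i j) x := diff_g_entry hU hg hx
  have hφd : ∀ i, DifferentiableAt ℝ (φ i) x := diff_phi hU hφ hx
  have hpdg : ∀ i j k, DifferentiableAt ℝ (fun z => pd (fun w => g w i j) k z) x :=
    diff_pd_g hU hg hx
  have hΓd : ∀ a b c, DifferentiableAt ℝ (weylConn g φ a b c) x :=
    diff_weylConn hU hginv hg hφ hx
  have hLd : ∀ a b c, DifferentiableAt ℝ (fun y => ∑ α, g y a α * weylConn g φ α b c y) x :=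
    fun a b c => DifferentiableAt.fun_sum fun α _ => (hgd a α).mul (hΓd α b c)
  have hstep1 : ∀ a b c d : Fin n, ∑ α, g x a α * pd (weylConn g φ α b c) d x
      = pd (fun y => ∑ α, g y a α * weylConn g φ α b c y) d x
        - ∑ α, pd (fun z => g z a α) d x * weylConn g φ α b c x := by
    intro a b c d
    rw [pd_sum Finset.univ (fun α y => g y a α * weylConn g φ α b c y)
        (fun α _ => (hgd a α).mul (hΓd α b c))]
    rw [Finset.sum_congr rfl fun α _ =>
      pd_mul (f := fun y => g y a α) (h := weylConn g φ α b c) (hgd a α) (hΓd α b c)]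
    rw [Finset.sum_add_distrib]
    ring
  have hD : ∀ c d : Fin n,
      pd (fun y => ∑ α, g y μ α * weylConn g φ α ν c y) d x
        + pd (fun y => ∑ α, g y ν α * weylConn g φ α μ c y) d x
      = pd (fun y => pd (fun z => g z μ ν) c y) d x
        + 2 * (pd (φ c) d x * g x μ ν) + 2 * (φ c x * pd (fun z => g z μ ν) d x) := by
    intro c d
    rw [← pd_add (hLd μ ν c) (hLd ν μ c)]
    have ev : (fun y => (∑ α, g y μ α * weylConn g φ α ν c y)
          + ∑ α, g y ν α * weylConn g φ α μ c y)
        =ᶠ[nhds x] (fun y => pd (fun z => g z μ ν) c y + 2 * (φ c y * g y μ ν)) := by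
      filter_upwards [hU.mem_nhds hx] with z hz
      exact lowConn_add hU hgsym hginv hz μ ν c
    rw [pd_congr ev]
    rw [pd_add (hpdg μ ν c) (((hφd c).fun_mul (hgd μ ν)).const_mul 2),
        pd_const_mul 2 ((hφd c).fun_mul (hgd μ ν)),
        pd_mul (hφd c) (hgd μ ν)]
    ring
  have hSchwarz : pd (fun y => pd (fun z => g z μ ν) κ y) l x
      = pd (fun y => pd (fun z => g z μ ν) l y) κ x :=
    pd_pd_symm ((hg μ ν).contDiffAt (hU.mem_nhds hx)) l κ
  have hcross : ∀ a b c d : Fin n,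
      ∑ α, pd (fun z => g z a α) d x * weylConn g φ α b c x
      = ∑ α, (∑ β, g x a β * weylConn g φ β α d x) * weylConn g φ α b c x
        + ∑ α, (∑ β, g x α β * weylConn g φ β a d x) * weylConn g φ α b c x
        - 2 * φ d x * ∑ α, g x a α * weylConn g φ α b c x := by
    intro a b c d
    rw [Finset.mul_sum, ← Finset.sum_add_distrib, ← Finset.sum_sub_distrib]
    apply Finset.sum_congr rfl
    intro α _
    have hl := lowConn_add hU hgsym hginv hx a α d (φ := φ)
    linear_combination (-(weylConn g φ α b c x)) * hl
  have hQswap : ∀ a b c d : Fin n,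
      ∑ α, g x a α * ∑ β, weylConn g φ β b c x * weylConn g φ α β d x
      = ∑ α, (∑ β, g x a β * weylConn g φ β α d x) * weylConn g φ α b c x :=
    fun a b c d => sum_swap_mul (fun α => g x a α) (fun β => weylConn g φ β b c x)
      (fun α β => weylConn g φ α β d x)
  have hsymQ : ∀ a b c d : Fin n,
      ∑ α, (∑ β, g x α β * weylConn g φ β a b x) * weylConn g φ α c d x
      = ∑ α, (∑ β, g x α β * weylConn g φ β c d x) * weylConn g φ α a b x := by
    intro a b c d
    simp only [Finset.sum_mul]
    rw [Finset.sum_comm]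
    apply Finset.sum_congr rfl
    intro α _
    apply Finset.sum_congr rfl
    intro β _
    rw [g_symm_pt hgsym hx β α]
    ring
  have hlowκ := lowConn_add (φ := φ) hU hgsym hginv hx μ ν κ
  have hlowl := lowConn_add (φ := φ) hU hgsym hginv hx μ ν l
  simp only [weylCurv, mul_sub, mul_add, Finset.sum_add_distrib, Finset.sum_sub_distrib]
  linear_combination (hstep1 μ ν κ l) - (hstep1 μ ν l κ) + (hstep1 ν μ κ l) - (hstep1 ν μ l κ)
    + (hD κ l) - (hD l κ) + hSchwarz
    - (hcross μ ν κ l) + (hcross μ ν l κ) - (hcross ν μ κ l) + (hcross ν μ l κ)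
    + (hQswap μ ν κ l) - (hQswap μ ν l κ) + (hQswap ν μ κ l) - (hQswap ν μ l κ)
    - (hsymQ μ l ν κ) - (hsymQ ν l μ κ)
    + (2 * φ l x) * hlowκ - (2 * φ κ x) * hlowl
end
end
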